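/- arXiv:1608.06737 — 4 statements merged into one kernel-verified Lean document; each statement's English description precedes it below -/
import Mathlib

section
/- For every complex s with Re(s) > 0 and every positive integer n, the sum S_n(s) = ∑_{k=0}^{n-1} (-1)^k C(n-1,k) (k+1)^{-s} equals (1/Γ(s)) ∫_0^∞ (1 - e^{-t})^{n-1} e^{-t} t^{s-1} dt. -/
open Complex Set MeasureTheory Real

theorem stmt_4 (s : ℂ) (hs : 0 < s.re) (n : ℕ) (hn : 0 < n) :
    ∑ k ∈ Finset.range n, (-1 : ℂ) ^ k * (n - 1).choose k * ((k : ℂ) + 1) ^ (-s)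
      = (1 / Complex.Gamma s) *
        ∫ t in Set.Ioi (0 : ℝ),
          ((1 - Real.exp (-t) : ℝ) : ℂ) ^ (n - 1) * (Real.exp (-t) : ℂ)
            * (t : ℂ) ^ (s - 1) := by
  have hΓ : Complex.Gamma s ≠ 0 := Complex.Gamma_ne_zero_of_re_pos hs
  set a : Fin n → ℂ := fun k ↦ (-1 : ℂ) ^ (k : ℕ) * (n - 1).choose (k : ℕ) with ha
  set p : Fin n → ℝ := fun k ↦ (k : ℝ) + 1 with hp
  set F : ℝ → ℂ := fun t ↦
    ((1 - Real.exp (-t) : ℝ) : ℂ) ^ (n - 1) * (Real.exp (-t) : ℂ) with hF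
  have hFsum : ∀ t ∈ Ioi (0 : ℝ),
      HasSum (fun k ↦ a k * (Real.exp (-p k * t) : ℂ)) (F t) := by
    intro t ht
    have h := hasSum_fintype (fun k : Fin n ↦ a k * (Real.exp (-p k * t) : ℂ))
    have heq : ∑ k : Fin n, a k * (Real.exp (-p k * t) : ℂ) = F t := by
      have hx : ∀ k : Fin n, (Real.exp (-p k * t) : ℂ)
          = (Real.exp (-t) : ℂ) ^ (k : ℕ) * (Real.exp (-t) : ℂ) := by
        intro k
        have : -p k * t = ((k : ℕ) + 1 : ℕ) * (-t) := by simp [hp]; ring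
        rw [this, Real.exp_nat_mul]
        rw [pow_succ]
        push_cast
        ring
      simp_rw [hx, ha]
      rw [hF]
      beta_reduce
      have hb := add_pow (-(Real.exp (-t) : ℂ)) 1 (n - 1)
      rw [Nat.sub_add_cancel hn] at hb
      rw [show ((1 - Real.exp (-t) : ℝ) : ℂ) = -(Real.exp (-t) : ℂ) + 1 by
            push_cast; ring,
        hb, Finset.sum_mul,
        Fin.sum_univ_eq_sum_range (fun k : ℕ ↦ (-1 : ℂ) ^ k *
          ((n - 1).choose k : ℂ) *
          ((Real.exp (-t) : ℂ) ^ k * (Real.exp (-t) : ℂ)))]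
      refine Finset.sum_congr rfl fun k _ ↦ ?_
      rw [one_pow, neg_pow]
      ring
    rwa [heq] at h
  have key := hasSum_mellin (a := a) (p := p) (F := F) (s := s)
    (fun k ↦ Or.inr (by positivity)) hs hFsum
    (.of_finite)
  have hsum := key.tsum_eq
  rw [tsum_fintype] at hsum
  have hmel : mellin F s = ∫ t in Set.Ioi (0 : ℝ),
      ((1 - Real.exp (-t) : ℝ) : ℂ) ^ (n - 1) * (Real.exp (-t) : ℂ)
        * (t : ℂ) ^ (s - 1) := by
    rw [mellin]
    refine setIntegral_congr_fun measurableSet_Ioi fun t ht ↦ ?_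
    rw [smul_eq_mul, mul_comm]
  rw [← hmel, ← hsum, Finset.mul_sum,
    ← Fin.sum_univ_eq_sum_range
      (fun k ↦ (-1 : ℂ) ^ k * ((n - 1).choose k : ℂ) * ((k : ℂ) + 1) ^ (-s))]
  refine Finset.sum_congr rfl fun k _ ↦ ?_
  have hpk : ((p k : ℝ) : ℂ) = (k : ℂ) + 1 := by simp [hp]
  rw [hpk, cpow_neg]
  field_simp [ha]
  rfl
end

section
/- For every positive integer n ≥ 2, ∫_0^∞ (1 - e^{-t})^{n-1} e^{-t} t^{σ-1} dt ≤ (1 - 1/(2n-1))^{n-1} · 2^σ Γ(σ) / √(2n-1), where σ > 0 is real. -/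
open Real MeasureTheory Set

/-- AM-GM: for `x ∈ [0,1]`, `x * (1-x)^m ≤ a * (1-a)^m` where `a = 1/(m+1)`. -/
lemma amgm_key (m : ℕ) (x : ℝ) (hx0 : 0 ≤ x) (hx1 : x ≤ 1) :
    x * (1 - x) ^ m ≤ (1 / ((m : ℝ) + 1)) * (1 - 1 / ((m : ℝ) + 1)) ^ m := by
  rcases Nat.eq_zero_or_pos m with hm | hm
  · subst hm; simpa using hx1
  have hmR : (1 : ℝ) ≤ (m : ℝ) := by exact_mod_cast hm
  set a : ℝ := 1 / ((m : ℝ) + 1) with ha_def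
  have hm1 : (0 : ℝ) < (m : ℝ) + 1 := by positivity
  have ha0 : 0 < a := by positivity
  have ha1' : a < 1 := by
    rw [ha_def, div_lt_one hm1]; linarith
  have ha' : a ≠ 0 := ne_of_gt ha0
  have h1a : (1 : ℝ) - a ≠ 0 := by linarith
  set u : ℝ := x / a with hu_def
  set v : ℝ := (1 - x) / (1 - a) with hv_def
  have hu0 : 0 ≤ u := by positivity
  have hv0 : 0 ≤ v := by
    apply div_nonneg (by linarith) (by linarith)
  -- AM-GM with weights a, 1-a
  have key : u ^ a * v ^ (1 - a) ≤ a * u + (1 - a) * v :=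
    Real.geom_mean_le_arith_mean2_weighted ha0.le (by linarith) hu0 hv0 (by ring)
  have hsum : a * u + (1 - a) * v = 1 := by
    rw [hu_def, hv_def]
    field_simp
    ring
  rw [hsum] at key
  have key2 : (u ^ a * v ^ (1 - a)) ^ ((m : ℝ) + 1) ≤ 1 := by
    apply Real.rpow_le_one (by positivity) key (by positivity)
  have expand : (u ^ a * v ^ (1 - a)) ^ ((m : ℝ) + 1) = u * v ^ m := by
    rw [Real.mul_rpow (Real.rpow_nonneg hu0 _) (Real.rpow_nonneg hv0 _),
      ← Real.rpow_mul hu0, ← Real.rpow_mul hv0]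
    have h1 : a * ((m : ℝ) + 1) = 1 := by rw [ha_def]; field_simp
    have h2 : (1 - a) * ((m : ℝ) + 1) = (m : ℝ) := by rw [ha_def]; field_simp; ring
    rw [h1, h2, Real.rpow_one, Real.rpow_natCast]
  rw [expand] at key2
  have huv : x * (1 - x) ^ m = (u * v ^ m) * (a * (1 - a) ^ m) := by
    rw [hu_def, hv_def, div_pow]
    field_simp
  rw [huv]
  calc (u * v ^ m) * (a * (1 - a) ^ m) ≤ 1 * (a * (1 - a) ^ m) := by
        exact mul_le_mul_of_nonneg_right key2
          (mul_nonneg ha0.le (pow_nonneg (by linarith) _))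
    _ = a * (1 - a) ^ m := by ring

theorem stmt_5 (n : ℕ) (hn : 2 ≤ n) (σ : ℝ) (hσ : 0 < σ) :
    (∫ t in Set.Ioi (0 : ℝ), (1 - Real.exp (-t)) ^ (n - 1) * Real.exp (-t) * t ^ (σ - 1))
      ≤ (1 - 1 / (2 * (n : ℝ) - 1)) ^ (n - 1) * ((2 : ℝ) ^ σ * Real.Gamma σ)
          / Real.sqrt (2 * (n : ℝ) - 1) := by
  have hn1 : (1 : ℝ) ≤ (n : ℝ) := by exact_mod_cast Nat.one_le_of_lt hn
  have h2n1 : (0 : ℝ) < 2 * (n : ℝ) - 1 := by linarith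
  set a : ℝ := 1 / (2 * (n : ℝ) - 1) with ha_def
  have ha0 : 0 < a := by positivity
  set C : ℝ := (1 - a) ^ (n - 1) / Real.sqrt (2 * (n : ℝ) - 1) with hC_def
  have hC0 : 0 ≤ C := by
    apply div_nonneg _ (Real.sqrt_nonneg _)
    apply pow_nonneg
    have : a ≤ 1 := by
      rw [ha_def, div_le_one h2n1]; linarith
    linarith
  -- pointwise bound
  have pointwise : ∀ t : ℝ, t ∈ Ioi (0:ℝ) →
      (1 - Real.exp (-t)) ^ (n - 1) * Real.exp (-t) * t ^ (σ - 1)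
        ≤ C * (t ^ (σ - 1) * Real.exp (-(1/2 * t))) := by
    intro t ht
    rw [mem_Ioi] at ht
    set x : ℝ := Real.exp (-t) with hx_def
    have hx0 : 0 < x := Real.exp_pos _
    have hx1 : x < 1 := by
      rw [hx_def, Real.exp_lt_one_iff]; linarith
    have hexp_half : Real.exp (-(1/2 * t)) = Real.sqrt x := by
      rw [hx_def, show -(1/2 * t) = (-t)/2 by ring, Real.exp_half]
    have key : (1 - x) ^ (n - 1) * x ≤ C * Real.sqrt x := by
      have hA : (1 - x) ^ (n - 1) * Real.sqrt x ≤ (1 - a) ^ (n - 1) * Real.sqrt a := by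
        have hsq : ((1 - x) ^ (n - 1) * Real.sqrt x) ^ 2
            ≤ ((1 - a) ^ (n - 1) * Real.sqrt a) ^ 2 := by
          have e1 : ((1 - x) ^ (n - 1) * Real.sqrt x) ^ 2
              = x * (1 - x) ^ (2 * (n - 1)) := by
            rw [mul_pow, Real.sq_sqrt hx0.le, ← pow_mul, mul_comm (n-1) 2]
            ring
          have e2 : ((1 - a) ^ (n - 1) * Real.sqrt a) ^ 2
              = a * (1 - a) ^ (2 * (n - 1)) := by
            rw [mul_pow, Real.sq_sqrt ha0.le, ← pow_mul, mul_comm (n-1) 2]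
            ring
          rw [e1, e2]
          have hcast : ((2 * (n - 1) : ℕ) : ℝ) + 1 = 2 * (n : ℝ) - 1 := by
            have : 1 ≤ n := by omega
            push_cast [this]
            ring
          have := amgm_key (2 * (n - 1)) x hx0.le hx1.le
          rwa [hcast, ← ha_def] at this
        have h1 : 0 ≤ (1 - x) ^ (n - 1) * Real.sqrt x := by
          apply mul_nonneg (pow_nonneg (by linarith) _) (Real.sqrt_nonneg _)
        have h2 : 0 ≤ (1 - a) ^ (n - 1) * Real.sqrt a := by
          have : a ≤ 1 := by rw [ha_def, div_le_one h2n1]; linarith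
          apply mul_nonneg (pow_nonneg (by linarith) _) (Real.sqrt_nonneg _)
        calc (1 - x) ^ (n - 1) * Real.sqrt x
            = Real.sqrt (((1 - x) ^ (n - 1) * Real.sqrt x) ^ 2) := (Real.sqrt_sq h1).symm
          _ ≤ Real.sqrt (((1 - a) ^ (n - 1) * Real.sqrt a) ^ 2) := Real.sqrt_le_sqrt hsq
          _ = (1 - a) ^ (n - 1) * Real.sqrt a := Real.sqrt_sq h2
      have hCa : (1 - a) ^ (n - 1) * Real.sqrt a = C := by
        have hsa : Real.sqrt a = (Real.sqrt (2 * (n : ℝ) - 1))⁻¹ := by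
          rw [ha_def, one_div, Real.sqrt_inv]
        rw [hsa, hC_def, div_eq_mul_inv]
      calc (1 - x) ^ (n - 1) * x
          = ((1 - x) ^ (n - 1) * Real.sqrt x) * Real.sqrt x := by
            rw [mul_assoc, Real.mul_self_sqrt hx0.le]
        _ ≤ ((1 - a) ^ (n - 1) * Real.sqrt a) * Real.sqrt x := by
            apply mul_le_mul_of_nonneg_right hA (Real.sqrt_nonneg _)
        _ = C * Real.sqrt x := by rw [hCa]
    have htp : (0:ℝ) ≤ t ^ (σ - 1) := Real.rpow_nonneg ht.le _
    calc (1 - x) ^ (n - 1) * x * t ^ (σ - 1)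
        ≤ (C * Real.sqrt x) * t ^ (σ - 1) := mul_le_mul_of_nonneg_right key htp
      _ = C * (t ^ (σ - 1) * Real.exp (-(1/2 * t))) := by rw [hexp_half]; ring
  -- integrability of the dominating function
  have hint : IntegrableOn (fun t : ℝ => C * (t ^ (σ - 1) * Real.exp (-(1/2 * t)))) (Ioi 0) := by
    apply Integrable.const_mul
    have := integrableOn_rpow_mul_exp_neg_mul_rpow (p := 1) (s := σ - 1) (b := 1/2)
      (by linarith) zero_lt_one (by norm_num)
    apply this.congr_fun _ measurableSet_Ioi
    intro t _
    simp [Real.rpow_one]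
  -- the value of the dominating integral
  have hval : (∫ t in Ioi (0:ℝ), t ^ (σ - 1) * Real.exp (-(1/2 * t)))
      = (2:ℝ) ^ σ * Real.Gamma σ := by
    have := Real.integral_rpow_mul_exp_neg_mul_Ioi hσ (r := 1/2) (by norm_num)
    rw [this]
    norm_num
  calc (∫ t in Set.Ioi (0 : ℝ), (1 - Real.exp (-t)) ^ (n - 1) * Real.exp (-t) * t ^ (σ - 1))
      ≤ ∫ t in Ioi (0:ℝ), C * (t ^ (σ - 1) * Real.exp (-(1/2 * t))) := by
        apply integral_mono_of_nonneg
        · filter_upwards [ae_restrict_mem measurableSet_Ioi] with t ht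
          rw [mem_Ioi] at ht
          have hx1 : Real.exp (-t) ≤ 1 := by
            rw [Real.exp_le_one_iff]; linarith
          exact mul_nonneg (mul_nonneg (pow_nonneg (by linarith) _)
            (Real.exp_pos _).le) (Real.rpow_nonneg ht.le _)
        · exact hint
        · filter_upwards [ae_restrict_mem measurableSet_Ioi] with t ht
          exact pointwise t ht
    _ = C * ∫ t in Ioi (0:ℝ), t ^ (σ - 1) * Real.exp (-(1/2 * t)) := integral_const_mul _ _
    _ = (1 - 1 / (2 * (n : ℝ) - 1)) ^ (n - 1) * ((2 : ℝ) ^ σ * Real.Gamma σ)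
          / Real.sqrt (2 * (n : ℝ) - 1) := by
        rw [hval, hC_def, ha_def]
        ring
end

section
/- For complex s with Re(s) > 0 and real x with 0 < x < 1, ∑_{n=1}^∞ S_n(s) x^n = -Li_s(x/(x-1)), where S_n(s) = ∑_{k=0}^{n-1} (-1)^k C(n-1,k) (k+1)^{-s} and Li_s(z) = ∑_{n=1}^∞ z^n / n^s (via its integral continuation Li_s(z) = (z/Γ(s)) ∫_0^∞ t^{s-1}/(e^t - z) dt for z outside [1,∞)). -/
/-- The polylogarithm via its integral representation
`Li_s(z) = (z/Γ(s)) ∫_0^∞ t^{s-1}/(e^t - z) dt`. -/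
noncomputable def Li (s z : ℂ) : ℂ :=
  z / Complex.Gamma s * ∫ t in Set.Ioi (0 : ℝ), (t : ℂ) ^ (s - 1) / (Complex.exp t - z)

/-- `S n s = ∑_{k=0}^{n-1} (-1)^k C(n-1,k) (k+1)^{-s}`. -/
noncomputable def S (n : ℕ) (s : ℂ) : ℂ :=
  ∑ k ∈ Finset.range n, (-1 : ℂ) ^ k * ((n - 1).choose k : ℂ) * ((k : ℂ) + 1) ^ (-s)

open MeasureTheory Set Complex Finset

namespace Stmt12Aux

/-- The summand. -/
noncomputable def F (s : ℂ) (x : ℝ) (n : ℕ) (t : ℝ) : ℂ :=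
  (t : ℂ) ^ (s - 1) * ((Real.exp (-t) * (x * (1 - Real.exp (-t))) ^ n * x : ℝ) : ℂ)

lemma cpow_contOn (s : ℂ) : ContinuousOn (fun t : ℝ => (t : ℂ) ^ (s - 1)) (Ioi 0) :=
  fun t ht => (Complex.continuousAt_ofReal_cpow_const t (s - 1)
    (Or.inr (Set.mem_Ioi.mp ht).ne')).continuousWithinAt

lemma norm_F {s : ℂ} {x : ℝ} (hx : 0 ≤ x) (n : ℕ) {t : ℝ} (ht : 0 < t) :
    ‖F s x n t‖ = t ^ (s.re - 1) * (Real.exp (-t) * (x * (1 - Real.exp (-t))) ^ n * x) := by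
  have h1 : (0:ℝ) ≤ 1 - Real.exp (-t) := by
    have := Real.exp_le_one_iff.mpr (by linarith : -t ≤ 0); linarith
  have h2 : (0:ℝ) ≤ Real.exp (-t) * (x * (1 - Real.exp (-t))) ^ n * x := by positivity
  rw [F, norm_mul, Complex.norm_cpow_eq_rpow_re_of_pos ht,
    Complex.norm_real, Real.norm_of_nonneg h2]
  simp [Complex.sub_re]

lemma F_le {x : ℝ} (hx : 0 ≤ x) (hx1 : x ≤ 1) (n : ℕ) {t : ℝ} (ht : 0 < t) :
    Real.exp (-t) * (x * (1 - Real.exp (-t))) ^ n * x ≤ Real.exp (-t) := by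
  have h1 : (0:ℝ) ≤ 1 - Real.exp (-t) := by
    have := Real.exp_le_one_iff.mpr (by linarith : -t ≤ 0); linarith
  have h1' : 1 - Real.exp (-t) ≤ 1 := by
    have := Real.exp_pos (-t); linarith
  have hb0 : (0:ℝ) ≤ x * (1 - Real.exp (-t)) := by positivity
  have hb1 : x * (1 - Real.exp (-t)) ≤ 1 := by nlinarith
  have hp : (x * (1 - Real.exp (-t))) ^ n ≤ 1 := pow_le_one₀ hb0 hb1
  have ha : (x * (1 - Real.exp (-t))) ^ n * x ≤ 1 :=
    mul_le_one₀ hp hx hx1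
  calc Real.exp (-t) * (x * (1 - Real.exp (-t))) ^ n * x
      = Real.exp (-t) * ((x * (1 - Real.exp (-t))) ^ n * x) := by ring
    _ ≤ Real.exp (-t) := mul_le_of_le_one_right (Real.exp_pos _).le ha

lemma F_integrable {s : ℂ} (hs : 0 < s.re) {x : ℝ} (hx : 0 ≤ x) (hx1 : x ≤ 1) (n : ℕ) :
    IntegrableOn (F s x n) (Ioi 0) := by
  refine MeasureTheory.Integrable.mono (Complex.GammaIntegral_convergent hs) ?_ ?_
  · refine ContinuousOn.aestronglyMeasurable ?_ measurableSet_Ioi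
    exact (cpow_contOn s).mul (Complex.continuous_ofReal.comp (by fun_prop)).continuousOn
  · rw [ae_restrict_iff' measurableSet_Ioi]
    filter_upwards with t ht
    rw [Set.mem_Ioi] at ht
    rw [norm_F hx n ht, norm_mul, Complex.norm_real,
      Complex.norm_cpow_eq_rpow_re_of_pos ht, Real.norm_of_nonneg (Real.exp_pos _).le]
    have h3 := F_le hx hx1 n ht
    have h0 : (0:ℝ) ≤ t ^ (s.re - 1) := Real.rpow_nonneg ht.le _
    simp only [Complex.sub_re, Complex.one_re]
    nlinarith

/-- Integrability of `t^(s-1) e^{-(k+1)t}`. -/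
lemma g_integrable {s : ℂ} (hs : 0 < s.re) (k : ℕ) :
    IntegrableOn (fun t : ℝ => (t : ℂ) ^ (s - 1) * Complex.exp (-(((k : ℂ) + 1) * t)))
      (Ioi 0) := by
  refine MeasureTheory.Integrable.mono (Complex.GammaIntegral_convergent hs) ?_ ?_
  · refine ContinuousOn.aestronglyMeasurable ?_ measurableSet_Ioi
    exact (cpow_contOn s).mul (by fun_prop)
  · rw [ae_restrict_iff' measurableSet_Ioi]
    filter_upwards with t ht
    rw [Set.mem_Ioi] at ht
    have h0 : (0:ℝ) ≤ t ^ (s.re - 1) := Real.rpow_nonneg ht.le _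
    have hre : (-(((k : ℂ) + 1) * t)).re = -(((k:ℝ) + 1) * t) := by
      simp [Complex.mul_re]
    simp only [norm_mul, Complex.norm_cpow_eq_rpow_re_of_pos ht,
      Complex.norm_exp, Complex.norm_real, Real.norm_eq_abs, hre, abs_of_pos (Real.exp_pos (-t))]
    have hexp : Real.exp (-(((k:ℝ)+1) * t)) ≤ Real.exp (-t) := by
      apply Real.exp_le_exp.mpr
      nlinarith [Nat.cast_nonneg (α := ℝ) k]
    simp only [Complex.sub_re, Complex.one_re]
    nlinarith

/-- The key integral evaluation. -/
lemma integral_F {s : ℂ} (hs : 0 < s.re) {x : ℝ} (hx : 0 < x) (hx1 : x < 1) (n : ℕ) :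
    ∫ t in Ioi (0:ℝ), F s x n t =
      Complex.Gamma s * (S (n + 1) s * (x : ℂ) ^ (n + 1)) := by
  have key : ∀ t ∈ Ioi (0:ℝ), F s x n t = ∑ k ∈ Finset.range (n + 1),
      ((x : ℂ) ^ (n + 1) * ((-1 : ℂ) ^ k * (n.choose k : ℂ))) *
        ((t : ℂ) ^ (s - 1) * Complex.exp (-(((k : ℂ) + 1) * t))) := by
    intro t _
    have hexp : ∀ k : ℕ, Complex.exp (-(((k : ℂ) + 1) * t)) =
        Complex.exp (-(t:ℂ)) ^ (k + 1) := by
      intro k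
      rw [← Complex.exp_nat_mul]
      congr 1
      push_cast
      ring
    have hbin : ((1 : ℂ) - Complex.exp (-(t:ℂ))) ^ n =
        ∑ k ∈ Finset.range (n + 1),
          (-Complex.exp (-(t:ℂ))) ^ k * 1 ^ (n - k) * (n.choose k : ℂ) := by
      rw [sub_eq_neg_add, add_pow]
    simp only [hexp, F]
    push_cast
    rw [mul_pow, hbin]
    simp only [Finset.mul_sum, Finset.sum_mul]
    refine Finset.sum_congr rfl fun k _ => ?_
    rw [neg_pow, one_pow]
    ring
  rw [MeasureTheory.setIntegral_congr_fun measurableSet_Ioi key,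
    MeasureTheory.integral_finset_sum _ (fun k _ => ((g_integrable hs k).const_mul _))]
  have hev : ∀ k ∈ Finset.range (n + 1),
      (∫ t in Ioi (0:ℝ), ((x : ℂ) ^ (n + 1) * ((-1 : ℂ) ^ k * (n.choose k : ℂ))) *
        ((t : ℂ) ^ (s - 1) * Complex.exp (-(((k : ℂ) + 1) * t)))) =
      (x : ℂ) ^ (n + 1) * ((-1 : ℂ) ^ k * (n.choose k : ℂ) * (((k : ℂ) + 1) ^ (-s)
        * Complex.Gamma s)) := by
    intro k _
    rw [MeasureTheory.integral_const_mul]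
    have hr : (0:ℝ) < (k : ℝ) + 1 := by positivity
    have h := Complex.integral_cpow_mul_exp_neg_mul_Ioi hs hr
    push_cast at h
    rw [h]
    have hcp : (1 / ((k : ℂ) + 1)) ^ s = ((k : ℂ) + 1) ^ (-s) := by
      have hcast : ((k : ℂ) + 1) = (((k : ℝ) + 1 : ℝ) : ℂ) := by push_cast; ring
      rw [one_div, Complex.inv_cpow _ _ (by
        rw [hcast, Complex.arg_ofReal_of_nonneg hr.le]; exact Real.pi_ne_zero.symm),
        ← Complex.cpow_neg]
    rw [hcp]
    ring
  rw [Finset.sum_congr rfl hev, S]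
  simp only [Nat.add_sub_cancel]
  rw [Finset.sum_mul, Finset.mul_sum]
  refine Finset.sum_congr rfl fun k _ => ?_
  ring

lemma summable_norm {s : ℂ} (hs : 0 < s.re) {x : ℝ} (hx : 0 < x) (hx1 : x < 1) :
    Summable fun n => ∫ t in Ioi (0:ℝ), ‖F s x n t‖ := by
  set C : ℝ := ∫ t in Ioi (0:ℝ), Real.exp (-t) * t ^ (s.re - 1) with hC
  have hint : IntegrableOn (fun t : ℝ => Real.exp (-t) * t ^ (s.re - 1)) (Ioi 0) :=
    Real.GammaIntegral_convergent hs
  refine Summable.of_nonneg_of_le (fun n => integral_nonneg fun t => norm_nonneg _)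
    (fun n => ?_) (((summable_geometric_of_lt_one hx.le hx1).mul_right C))
  have hle : ∀ t ∈ Ioi (0:ℝ), ‖F s x n t‖ ≤ x ^ n * (Real.exp (-t) * t ^ (s.re - 1)) := by
    intro t ht
    rw [Set.mem_Ioi] at ht
    rw [norm_F hx.le n ht]
    have h1 : (0:ℝ) ≤ 1 - Real.exp (-t) := by
      have := Real.exp_le_one_iff.mpr (by linarith : -t ≤ 0); linarith
    have hb0 : (0:ℝ) ≤ x * (1 - Real.exp (-t)) := by positivity
    have hb1 : x * (1 - Real.exp (-t)) ≤ x := by nlinarith [Real.exp_pos (-t)]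
    have hp : (x * (1 - Real.exp (-t))) ^ n ≤ x ^ n := pow_le_pow_left₀ hb0 hb1 n
    have h0 : (0:ℝ) ≤ t ^ (s.re - 1) := Real.rpow_nonneg ht.le _
    have hx1' : x ≤ 1 := hx1.le
    calc t ^ (s.re - 1) * (Real.exp (-t) * (x * (1 - Real.exp (-t))) ^ n * x)
        ≤ t ^ (s.re - 1) * (Real.exp (-t) * x ^ n * 1) := by
          apply mul_le_mul_of_nonneg_left _ h0
          have ha : (x * (1 - Real.exp (-t))) ^ n * x ≤ x ^ n := by
            nlinarith [pow_nonneg hb0 n]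
          calc Real.exp (-t) * (x * (1 - Real.exp (-t))) ^ n * x
              = Real.exp (-t) * ((x * (1 - Real.exp (-t))) ^ n * x) := by ring
            _ ≤ Real.exp (-t) * x ^ n :=
                mul_le_mul_of_nonneg_left ha (Real.exp_pos _).le
            _ = Real.exp (-t) * x ^ n * 1 := by ring
      _ = x ^ n * (Real.exp (-t) * t ^ (s.re - 1)) := by ring
  calc (∫ t in Ioi (0:ℝ), ‖F s x n t‖)
      ≤ ∫ t in Ioi (0:ℝ), x ^ n * (Real.exp (-t) * t ^ (s.re - 1)) :=
        MeasureTheory.setIntegral_mono_on ((F_integrable hs hx.le hx1.le n).norm)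
          (hint.const_mul _) measurableSet_Ioi hle
    _ = x ^ n * C := by rw [MeasureTheory.integral_const_mul]

lemma tsum_F (s : ℂ) {x : ℝ} (hx : 0 < x) (hx1 : x < 1) {t : ℝ} (ht : 0 < t) :
    ∑' n, F s x n t =
      (-(((x : ℂ)) / ((x : ℂ) - 1))) *
        ((t : ℂ) ^ (s - 1) / (Complex.exp t - (x : ℂ) / ((x : ℂ) - 1))) := by
  have h1 : (0:ℝ) ≤ 1 - Real.exp (-t) := by
    have := Real.exp_le_one_iff.mpr (by linarith : -t ≤ 0); linarith
  have hrlt : ‖((x * (1 - Real.exp (-t)) : ℝ) : ℂ)‖ < 1 := by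
    rw [Complex.norm_real, Real.norm_of_nonneg (by positivity)]
    nlinarith [Real.exp_pos (-t)]
  have hrw : ∀ n : ℕ, F s x n t =
      ((t : ℂ) ^ (s - 1) * ((Real.exp (-t) * x : ℝ) : ℂ)) *
        (((x * (1 - Real.exp (-t)) : ℝ) : ℂ)) ^ n := by
    intro n; rw [F]; push_cast; ring
  rw [funext hrw, tsum_mul_left, tsum_geometric_of_norm_lt_one hrlt]
  have he : Complex.exp (t : ℂ) = ((Real.exp t : ℝ) : ℂ) := (Complex.ofReal_exp t).symm
  rw [he]
  have hx1' : (x : ℝ) - 1 ≠ 0 := by linarith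
  have hd1 : (1 : ℝ) - x * (1 - Real.exp (-t)) > 0 := by nlinarith [Real.exp_pos (-t)]
  have hd2 : Real.exp t - x / (x - 1) > 0 := by
    have : x / (x - 1) < 0 := div_neg_of_pos_of_neg hx (by linarith)
    nlinarith [Real.exp_pos t]
  have key : (Real.exp (-t) * x : ℝ) * (1 - x * (1 - Real.exp (-t)))⁻¹ =
      (-(x / (x - 1))) * (Real.exp t - x / (x - 1))⁻¹ := by
    rw [Real.exp_neg]
    have hE := Real.exp_pos t
    have hE' : Real.exp t ≠ 0 := hE.ne'
    have hn1 : 1 - x * (1 - (Real.exp t)⁻¹) ≠ 0 := by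
      rw [← Real.exp_neg]; exact hd1.ne'
    have hn2 : Real.exp t - x / (x - 1) ≠ 0 := hd2.ne'
    have hD : x + Real.exp t * (1 - x) ≠ 0 := by nlinarith
    field_simp
    ring_nf
    rw [← inv_neg]; congr 1; ring
  calc (t : ℂ) ^ (s - 1) * ((Real.exp (-t) * x : ℝ) : ℂ) *
        (1 - ((x * (1 - Real.exp (-t)) : ℝ) : ℂ))⁻¹
      = (t : ℂ) ^ (s - 1) *
          (((Real.exp (-t) * x : ℝ) * (1 - x * (1 - Real.exp (-t)))⁻¹ : ℝ) : ℂ) := by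
        push_cast; ring
    _ = (t : ℂ) ^ (s - 1) *
          (((-(x / (x - 1))) * (Real.exp t - x / (x - 1))⁻¹ : ℝ) : ℂ) := by rw [key]
    _ = _ := by push_cast; ring

end Stmt12Aux

open Stmt12Aux in
theorem stmt_12 (s : ℂ) (hs : 0 < s.re) (x : ℝ) (hx : 0 < x) (hx1 : x < 1) :
    HasSum (fun n : ℕ => S (n + 1) s * (x : ℂ) ^ (n + 1))
      (-Li s ((x : ℂ) / ((x : ℂ) - 1))) := by
  set z : ℂ := (x : ℂ) / ((x : ℂ) - 1) with hz
  have hΓ : Complex.Gamma s ≠ 0 := Complex.Gamma_ne_zero_of_re_pos hs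
  have H := MeasureTheory.hasSum_integral_of_summable_integral_norm
    (μ := volume.restrict (Ioi (0:ℝ))) (F := F s x)
    (fun n => F_integrable hs hx.le hx1.le n) (summable_norm hs hx hx1)
  have h2 : (∫ t in Ioi (0:ℝ), ∑' n, F s x n t) = Complex.Gamma s * (-Li s z) := by
    rw [MeasureTheory.setIntegral_congr_fun measurableSet_Ioi
      (fun t ht => tsum_F s hx hx1 (Set.mem_Ioi.mp ht)),
      MeasureTheory.integral_const_mul, Li]
    field_simp
    ring
  have h1 : (fun n => ∫ t in Ioi (0:ℝ), F s x n t) =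
      fun n => Complex.Gamma s * (S (n + 1) s * (x : ℂ) ^ (n + 1)) := by
    funext n; exact integral_F hs hx hx1 n
  rw [h1, h2] at H
  exact (hasSum_mul_left_iff hΓ).mp H
end

section
/- For complex s with Re(s) > 1, (s-1)ζ(s) = -∫_0^1 Li_s(z/(z-1)) dz, where the integrand is given by the convergent series Li_s(z/(z-1)) = ∑_{n=1}^∞ (z/(z-1))^n / n^s for z ∈ (0, 1/2) extended by the integral representation Li_s(w) = (w/Γ(s)) ∫_0^∞ t^{s-1}/(e^t - w) dt for w ∈ (-∞, 0]. -/
open MeasureTheory Set Real Filter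
open scoped Topology

-- basic facts about exp
lemma exp_sub_one_pos {t : ℝ} (ht : 0 < t) : 0 < rexp t - 1 := by
  have : rexp 0 < rexp t := Real.exp_lt_exp.mpr ht
  simpa using this

lemma exp_sub_one_ge {t : ℝ} (ht : 0 < t) : t * rexp (t/2) < rexp t - 1 := by
  have h := (Real.self_lt_sinh_iff.mpr (by positivity : 0 < t/2))
  rw [Real.sinh_eq] at h
  have h2 : t * rexp (t/2) < (rexp (t/2) - rexp (-(t/2))) * rexp (t/2) := by
    nlinarith [Real.exp_pos (t/2)]
  calc t * rexp (t/2) < (rexp (t/2) - rexp (-(t/2))) * rexp (t/2) := h2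
    _ = rexp t - 1 := by
        rw [sub_mul, ← Real.exp_add, ← Real.exp_add]; norm_num

-- geometric sums
lemma hasSum_one_div_exp_sub_one {t : ℝ} (ht : 0 < t) :
    HasSum (fun n : ℕ => rexp (-((n : ℝ) + 1) * t)) (1 / (rexp t - 1)) := by
  set r := rexp (-t) with hr
  have hr0 : 0 < r := Real.exp_pos _
  have hr1 : r < 1 := by
    rw [hr, Real.exp_lt_one_iff]; linarith
  have h := (hasSum_geometric_of_lt_one hr0.le hr1).mul_left r
  have he : r * (1 - r)⁻¹ = 1 / (rexp t - 1) := by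
    have h1 : rexp t - 1 ≠ 0 := (exp_sub_one_pos ht).ne'
    have h2 : (1 : ℝ) - r ≠ 0 := by nlinarith
    rw [hr, Real.exp_neg]
    field_simp
  rw [he] at h
  refine h.congr_fun fun n => ?_
  rw [show -((n : ℝ) + 1) * t = ((n + 1 : ℕ) : ℝ) * (-t) by push_cast; ring,
    Real.exp_nat_mul, ← hr, pow_succ, mul_comm]

lemma hasSum_exp_div_exp_sub_one_sq {t : ℝ} (ht : 0 < t) :
    HasSum (fun n : ℕ => ((n : ℝ) + 1) * rexp (-((n : ℝ) + 1) * t))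
      (rexp t / (rexp t - 1) ^ 2) := by
  set r := rexp (-t) with hr
  have hr0 : 0 < r := Real.exp_pos _
  have hr1 : r < 1 := by rw [hr, Real.exp_lt_one_iff]; linarith
  have hnorm : ‖r‖ < 1 := by rw [Real.norm_eq_abs, abs_of_pos hr0]; exact hr1
  have h1 := hasSum_coe_mul_geometric_of_norm_lt_one hnorm
  have h2 := hasSum_geometric_of_lt_one hr0.le hr1
  have h := ((h1.add h2).mul_left r)
  have he : r * (r / (1 - r) ^ 2 + (1 - r)⁻¹) = rexp t / (rexp t - 1) ^ 2 := by
    have ha : rexp t - 1 ≠ 0 := (exp_sub_one_pos ht).ne'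
    have hb : (1 : ℝ) - r ≠ 0 := by nlinarith
    rw [hr, Real.exp_neg]
    have hc : rexp t ≠ 0 := (Real.exp_pos t).ne'
    field_simp
    ring
  rw [he] at h
  refine h.congr_fun fun n => ?_
  rw [show -((n : ℝ) + 1) * t = ((n + 1 : ℕ) : ℝ) * (-t) by push_cast; ring,
    Real.exp_nat_mul, ← hr, pow_succ]
  ring

lemma summable_aux {σ : ℝ} (hσ : 1 < σ) :
    Summable (fun n : ℕ => 1 / ((n : ℝ) + 1) ^ σ) := by
  have := (Real.summable_one_div_nat_rpow (p := σ)).mpr hσ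
  have h2 := (summable_nat_add_iff 1).mpr this
  refine h2.congr fun n => ?_
  push_cast
  ring

lemma mellin_one_div_exp_sub_one {s : ℂ} (hs : 1 < s.re) :
    HasSum (fun n : ℕ => Complex.Gamma s * 1 / (((n : ℝ) + 1 : ℝ) : ℂ) ^ s)
      (mellin (fun t : ℝ => ((1 / (rexp t - 1) : ℝ) : ℂ)) s) := by
  apply hasSum_mellin (a := fun _ : ℕ => (1 : ℂ)) (p := fun n : ℕ => (n : ℝ) + 1)
  · exact fun n => Or.inr (by positivity)
  · linarith
  · intro t ht
    have := Complex.hasSum_ofReal.mpr (hasSum_one_div_exp_sub_one ht)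
    refine this.congr_fun fun n => ?_
    push_cast
    ring
  · simp only [norm_one]
    exact summable_aux hs

lemma mellin_exp_div_exp_sub_one_sq {s : ℂ} (hs : 1 < s.re) :
    HasSum (fun n : ℕ => Complex.Gamma (s + 1) * ((n : ℂ) + 1) / (((n : ℝ) + 1 : ℝ) : ℂ) ^ (s + 1))
      (mellin (fun t : ℝ => ((rexp t / (rexp t - 1) ^ 2 : ℝ) : ℂ)) (s + 1)) := by
  apply hasSum_mellin (a := fun n : ℕ => ((n : ℂ) + 1)) (p := fun n : ℕ => (n : ℝ) + 1)
  · exact fun n => Or.inr (by positivity)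
  · simp only [Complex.add_re, Complex.one_re]; linarith
  · intro t ht
    have := Complex.hasSum_ofReal.mpr (hasSum_exp_div_exp_sub_one_sq ht)
    refine this.congr_fun fun n => ?_
    push_cast
    ring
  · have : (fun n : ℕ => ‖(n : ℂ) + 1‖ / ((n : ℝ) + 1) ^ (s + 1).re)
        = fun n : ℕ => 1 / ((n : ℝ) + 1) ^ s.re := by
      funext n
      have hn : (0:ℝ) < (n:ℝ) + 1 := by positivity
      have h1 : ‖(n : ℂ) + 1‖ = (n : ℝ) + 1 := by
        rw [show ((n : ℂ) + 1) = (((n : ℝ) + 1 : ℝ) : ℂ) by push_cast; ring,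
          Complex.norm_real, Real.norm_eq_abs, abs_of_pos hn]
      rw [h1, show (s+1).re = s.re + 1 by simp, Real.rpow_add hn, Real.rpow_one]
      field_simp
    rw [this]
    exact summable_aux hs

lemma mellin_one_div_exp_sub_one_eq {s : ℂ} (hs : 1 < s.re) :
    mellin (fun t : ℝ => ((1 / (rexp t - 1) : ℝ) : ℂ)) s
      = Complex.Gamma s * riemannZeta s := by
  rw [← (mellin_one_div_exp_sub_one hs).tsum_eq, zeta_eq_tsum_one_div_nat_add_one_cpow hs,
    ← tsum_mul_left]
  congr 1
  funext n
  push_cast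
  ring

lemma mellin_exp_div_exp_sub_one_sq_eq {s : ℂ} (hs : 1 < s.re) :
    mellin (fun t : ℝ => ((rexp t / (rexp t - 1) ^ 2 : ℝ) : ℂ)) (s + 1)
      = s * Complex.Gamma s * riemannZeta s := by
  have hs0 : s ≠ 0 := by
    intro h; rw [h] at hs; simp at hs; linarith
  rw [← (mellin_exp_div_exp_sub_one_sq hs).tsum_eq, zeta_eq_tsum_one_div_nat_add_one_cpow hs,
    ← tsum_mul_left]
  congr 1
  funext n
  have hn : (((n : ℝ) + 1 : ℝ) : ℂ) ≠ 0 := Complex.ofReal_ne_zero.mpr (by positivity)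
  have hpow : (((n : ℝ) + 1 : ℝ) : ℂ) ^ s ≠ 0 := by
    rw [Ne, Complex.cpow_eq_zero_iff]
    tauto
  rw [Complex.Gamma_add_one s hs0, Complex.cpow_add _ _ hn, Complex.cpow_one]
  push_cast at hpow hn ⊢
  field_simp

lemma integrableOn_cpow_mul_aux {a : ℂ} (ha : 0 < a.re) {g : ℝ → ℝ}
    (hg : ContinuousOn g (Ioi 0)) {b : ℝ} (hb : -1 < a.re - 1 + b)
    {c₁ c₂ : ℝ}
    (h1 : ∀ t ∈ Ioc (0:ℝ) 1, |g t| ≤ c₁ * t ^ b)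
    (h2 : ∀ t ∈ Ioi (1:ℝ), |g t| ≤ c₂ * rexp (-t)) :
    IntegrableOn (fun t : ℝ => (t : ℂ) ^ (a - 1) * ((g t : ℝ) : ℂ)) (Ioi 0) := by
  have hmeas : ContinuousOn (fun t : ℝ => (t : ℂ) ^ (a - 1) * ((g t : ℝ) : ℂ)) (Ioi 0) := by
    refine ContinuousOn.mul (fun t ht => ?_) (Complex.continuous_ofReal.comp_continuousOn hg)
    exact (Complex.continuousAt_ofReal_cpow_const t (a - 1)
      (Or.inr (ne_of_gt ht))).continuousWithinAt
  have hnorm : ∀ t ∈ Ioi (0:ℝ), ‖(t : ℂ) ^ (a - 1) * ((g t : ℝ) : ℂ)‖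
      = t ^ (a.re - 1) * |g t| := by
    intro t ht
    rw [norm_mul, Complex.norm_cpow_eq_rpow_re_of_pos ht,
      Complex.norm_real, Real.norm_eq_abs, Complex.sub_re, Complex.one_re]
  rw [← Ioc_union_Ioi_eq_Ioi (zero_le_one : (0:ℝ) ≤ 1)]
  refine IntegrableOn.union ?_ ?_
  · refine Integrable.mono' (g := fun t => c₁ * t ^ (a.re - 1 + b)) ?_ ?_ ?_
    · have : IntervalIntegrable (fun t : ℝ => t ^ (a.re - 1 + b)) volume 0 1 :=
        intervalIntegral.intervalIntegrable_rpow' hb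
      rw [intervalIntegrable_iff_integrableOn_Ioc_of_le zero_le_one] at this
      exact this.const_mul _
    · exact (hmeas.mono Ioc_subset_Ioi_self).aestronglyMeasurable measurableSet_Ioc
    · filter_upwards [ae_restrict_mem measurableSet_Ioc] with t ht
      rw [hnorm t (Ioc_subset_Ioi_self ht)]
      calc t ^ (a.re - 1) * |g t| ≤ t ^ (a.re - 1) * (c₁ * t ^ b) := by
            exact mul_le_mul_of_nonneg_left (h1 t ht) (Real.rpow_nonneg ht.1.le _)
        _ = c₁ * t ^ (a.re - 1 + b) := by
            rw [Real.rpow_add ht.1]; ring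
  · refine Integrable.mono' (g := fun t => c₂ * (rexp (-t) * t ^ (a.re - 1))) ?_ ?_ ?_
    · exact ((Real.GammaIntegral_convergent ha).mono_set
        (Ioi_subset_Ioi zero_le_one)).const_mul _
    · exact (hmeas.mono (Ioi_subset_Ioi zero_le_one)).aestronglyMeasurable measurableSet_Ioi
    · filter_upwards [ae_restrict_mem measurableSet_Ioi] with t ht
      have ht0 : (0:ℝ) < t := lt_trans zero_lt_one ht
      rw [hnorm t ht0]
      calc t ^ (a.re - 1) * |g t| ≤ t ^ (a.re - 1) * (c₂ * rexp (-t)) := by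
            exact mul_le_mul_of_nonneg_left (h2 t ht) (Real.rpow_nonneg ht0.le _)
        _ = c₂ * (rexp (-t) * t ^ (a.re - 1)) := by ring

lemma exp_sub_one_ne : ∀ t ∈ Ioi (0:ℝ), rexp t - 1 ≠ 0 :=
  fun _ ht => (exp_sub_one_pos ht).ne'

lemma integrable_F1 {s : ℂ} (hs : 1 < s.re) :
    IntegrableOn (fun t : ℝ => (t : ℂ) ^ (s - 1) * ((1 / (rexp t - 1) : ℝ) : ℂ)) (Ioi 0) := by
  refine integrableOn_cpow_mul_aux (by linarith) ?_ (b := -1) (by simpa using hs)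
    (c₁ := 1) (c₂ := (1 - rexp (-1))⁻¹) ?_ ?_
  · exact ContinuousOn.div continuousOn_const
      ((Real.continuous_exp.continuousOn).sub continuousOn_const) exp_sub_one_ne
  · intro t ht
    have h1 : t ≤ rexp t - 1 := by linarith [Real.add_one_le_exp t]
    rw [abs_of_pos (one_div_pos.mpr (exp_sub_one_pos ht.1)), Real.rpow_neg_one, one_mul,
      ← one_div]
    exact one_div_le_one_div_of_le ht.1 h1
  · intro t ht
    have ht0 : (0:ℝ) < t := lt_trans zero_lt_one ht
    have hc : (0:ℝ) < 1 - rexp (-1) := by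
      have : rexp (-1) < rexp 0 := Real.exp_lt_exp.mpr (by norm_num)
      simp only [Real.exp_zero] at this
      linarith
    have h3 : rexp (-t) * (rexp t - 1) = 1 - rexp (-t) := by
      rw [mul_sub, ← Real.exp_add, mul_one]
      simp
    have h4 : rexp (-t) ≤ rexp (-1) := Real.exp_le_exp.mpr (by linarith [mem_Ioi.mp ht])
    rw [abs_of_pos (one_div_pos.mpr (exp_sub_one_pos ht0)),
      show (1 - rexp (-1))⁻¹ * rexp (-t) = rexp (-t) / (1 - rexp (-1)) by ring,
      div_le_div_iff₀ (exp_sub_one_pos ht0) hc, one_mul, h3]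
    linarith

lemma integrable_F2 {s : ℂ} (hs : 1 < s.re) :
    IntegrableOn (fun t : ℝ => (t : ℂ) ^ (s + 1 - 1)
      * ((rexp t / (rexp t - 1) ^ 2 : ℝ) : ℂ)) (Ioi 0) := by
  refine integrableOn_cpow_mul_aux (a := s + 1) (by simp; linarith) ?_ (b := -2)
    (by simp; linarith) (c₁ := rexp 1) (c₂ := ((1 - rexp (-1))⁻¹) ^ 2) ?_ ?_
  · refine ContinuousOn.div (Real.continuous_exp.continuousOn) ?_ ?_
    · exact (((Real.continuous_exp.continuousOn).sub continuousOn_const).pow 2)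
    · intro t ht
      exact pow_ne_zero 2 (exp_sub_one_ne t ht)
  · intro t ht
    have h1 : t ≤ rexp t - 1 := by linarith [Real.add_one_le_exp t]
    have h2 : rexp t ≤ rexp 1 := Real.exp_le_exp.mpr ht.2
    have hd : (0:ℝ) < (rexp t - 1) ^ 2 := pow_pos (exp_sub_one_pos ht.1) 2
    have hpow : t ^ (-2:ℝ) = (t ^ 2)⁻¹ := by
      rw [Real.rpow_neg ht.1.le, show (2:ℝ) = ((2:ℕ):ℝ) by norm_num, Real.rpow_natCast]
    rw [abs_of_pos (div_pos (Real.exp_pos t) hd), hpow, ← div_eq_mul_inv]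
    exact div_le_div₀ (Real.exp_pos 1).le h2 (pow_pos ht.1 2)
      (pow_le_pow_left₀ ht.1.le h1 2)
  · intro t ht
    have ht0 : (0:ℝ) < t := lt_trans zero_lt_one ht
    have hc : (0:ℝ) < 1 - rexp (-1) := by
      have : rexp (-1) < rexp 0 := Real.exp_lt_exp.mpr (by norm_num)
      simp only [Real.exp_zero] at this
      linarith
    have he : (1 - rexp (-1)) * rexp t ≤ rexp t - 1 := by
      have h5 : rexp (-1) * rexp t = rexp (t - 1) := by rw [← Real.exp_add]; ring_nf
      have h6 : (1:ℝ) ≤ rexp (t - 1) := by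
        linarith [Real.add_one_le_exp (t - 1), mem_Ioi.mp ht]
      nlinarith
    have hd : (0:ℝ) < (rexp t - 1) ^ 2 := pow_pos (exp_sub_one_pos ht0) 2
    have hsq : ((1 - rexp (-1)) * rexp t) ^ 2 ≤ (rexp t - 1) ^ 2 :=
      pow_le_pow_left₀ (by positivity) he 2
    have hmul : rexp (-t) * rexp t = 1 := by rw [← Real.exp_add]; simp
    rw [abs_of_pos (div_pos (Real.exp_pos t) hd), div_le_iff₀ hd]
    have key : (1 - rexp (-1)) ^ 2 * rexp t ≤ rexp (-t) * (rexp t - 1) ^ 2 := by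
      nlinarith [Real.exp_pos (-t), Real.exp_pos t]
    calc rexp t = (1 - rexp (-1))⁻¹ ^ 2 * ((1 - rexp (-1)) ^ 2 * rexp t) := by
          field_simp
      _ ≤ (1 - rexp (-1))⁻¹ ^ 2 * (rexp (-t) * (rexp t - 1) ^ 2) :=
          mul_le_mul_of_nonneg_left key (by positivity)
      _ = (1 - rexp (-1))⁻¹ ^ 2 * rexp (-t) * (rexp t - 1) ^ 2 := by ring

lemma denom_neg {t z : ℝ} (ht : 0 < t) (hz0 : 0 ≤ z) (hz1 : z ≤ 1) :
    (rexp t - 1) * z - rexp t ≤ -1 := by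
  have h1 : 1 < rexp t := by linarith [exp_sub_one_pos ht]
  nlinarith

lemma interval_key {a b : ℝ} (ha : 0 < a) (hb : b = a + 1) :
    (∫ z in (0:ℝ)..1, z / (a * z - b)) = 1 / a - b / a ^ 2 * Real.log b := by
  have hne : ∀ z ∈ uIcc (0:ℝ) 1, b - a * z ≠ 0 := by
    intro z hz
    rw [uIcc_of_le zero_le_one] at hz
    nlinarith [hz.1, hz.2]
  have hderiv : ∀ z ∈ uIcc (0:ℝ) 1,
      HasDerivAt (fun z => z / a + b / a ^ 2 * Real.log (b - a * z))
        (z / (a * z - b)) z := by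
    intro z hz
    have h2 : HasDerivAt (fun z : ℝ => b - a * z) (-a) z := by
      simpa using ((hasDerivAt_id z).const_mul a).const_sub b
    have h3 := (h2.log (hne z hz)).const_mul (b / a ^ 2)
    have h4 := ((hasDerivAt_id z).div_const a).add h3
    refine h4.congr_deriv ?_
    have hd : b - a * z ≠ 0 := hne z hz
    have hd' : a * z - b ≠ 0 := fun h => hd (by linarith)
    field_simp
    ring
  have hint : IntervalIntegrable (fun z => z / (a * z - b)) volume 0 1 := by
    apply ContinuousOn.intervalIntegrable
    refine ContinuousOn.div (continuous_id.continuousOn)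
      (((continuous_const.mul continuous_id).sub continuous_const).continuousOn) ?_
    intro z hz
    exact fun h => hne z hz (by linarith)
  rw [intervalIntegral.integral_eq_sub_of_hasDerivAt hderiv hint]
  simp only [mul_zero, sub_zero, mul_one, zero_div, zero_add]
  rw [show b - a = 1 by rw [hb]; ring, Real.log_one]
  ring

lemma inner_integral {t : ℝ} (ht : 0 < t) :
    (∫ z in Ioo (0:ℝ) 1, z / ((rexp t - 1) * z - rexp t))
      = 1 / (rexp t - 1) - t * rexp t / (rexp t - 1) ^ 2 := by
  have ha : 0 < rexp t - 1 := exp_sub_one_pos ht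
  rw [← MeasureTheory.integral_Ioc_eq_integral_Ioo,
    ← intervalIntegral.integral_of_le zero_le_one,
    interval_key ha (by ring), Real.log_exp]
  ring

lemma sqrt_exp (t : ℝ) : Real.sqrt (rexp t) = rexp (t / 2) := by
  rw [show rexp t = rexp (t / 2) ^ 2 by rw [sq, ← Real.exp_add]; ring_nf,
    Real.sqrt_sq (Real.exp_pos _).le]

lemma integrable_f_half {σ : ℝ} (hσ : 0 < σ) :
    IntegrableOn (fun t : ℝ => t ^ (σ - 1) * rexp (-(t / 2))) (Ioi 0) := by
  have h0 := Real.GammaIntegral_convergent hσ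
  have h1 : IntegrableOn (fun x : ℝ => rexp (-((2:ℝ)⁻¹ * x)) * ((2:ℝ)⁻¹ * x) ^ (σ - 1))
      (Ioi 0) := by
    have h0' : IntegrableOn (fun x : ℝ => rexp (-x) * x ^ (σ - 1)) (Ioi ((2:ℝ)⁻¹ * 0)) := by
      simpa using h0
    have := (integrableOn_Ioi_comp_mul_left_iff
      (fun x : ℝ => rexp (-x) * x ^ (σ - 1)) 0 (by norm_num : (0:ℝ) < 2⁻¹)).mpr h0'
    simpa using this
  have h2 := h1.const_mul ((2:ℝ) ^ (σ - 1))
  refine IntegrableOn.congr_fun h2 (fun t ht => ?_) measurableSet_Ioi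
  rw [Real.mul_rpow (by norm_num) (le_of_lt ht), show -((2:ℝ)⁻¹ * t) = -(t/2) by ring]
  have h3 : (2:ℝ) ^ (σ - 1) * ((2:ℝ)⁻¹) ^ (σ - 1) = 1 := by
    rw [← Real.mul_rpow (by norm_num) (by norm_num)]
    norm_num
  linear_combination rexp (-(t/2)) * t ^ (σ - 1) * h3

lemma integrable_g_half : IntegrableOn (fun z : ℝ => (1 - z) ^ (-(2⁻¹:ℝ)) / 2) (Ioo 0 1) := by
  have h0 : IntervalIntegrable (fun x : ℝ => x ^ (-(2⁻¹:ℝ))) volume 0 1 :=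
    intervalIntegral.intervalIntegrable_rpow' (by norm_num)
  have h1 := (h0.comp_sub_left 1).symm
  simp only [sub_self, sub_zero] at h1
  rw [intervalIntegrable_iff_integrableOn_Ioc_of_le zero_le_one] at h1
  exact (h1.mono_set Ioo_subset_Ioc_self).div_const 2

lemma integrable_K {s : ℂ} (hs : 1 < s.re) :
    Integrable (Function.uncurry fun t z : ℝ =>
        (t : ℂ) ^ (s - 1) * ((z / ((rexp t - 1) * z - rexp t) : ℝ) : ℂ))
      ((volume.restrict (Ioi 0)).prod (volume.restrict (Ioo 0 1))) := by
  have hmeas : AEStronglyMeasurable (Function.uncurry fun t z : ℝ =>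
        (t : ℂ) ^ (s - 1) * ((z / ((rexp t - 1) * z - rexp t) : ℝ) : ℂ))
      ((volume.restrict (Ioi 0)).prod (volume.restrict (Ioo 0 1))) := by
    rw [Measure.prod_restrict]
    refine ContinuousOn.aestronglyMeasurable ?_ (measurableSet_Ioi.prod measurableSet_Ioo)
    refine ContinuousOn.mul ?_ ?_
    · intro p hp
      exact ((Complex.continuousAt_ofReal_cpow_const p.1 (s - 1)
        (Or.inr (ne_of_gt hp.1))).comp continuousAt_fst).continuousWithinAt
    · refine Complex.continuous_ofReal.comp_continuousOn ?_
      refine ContinuousOn.div continuous_snd.continuousOn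
        ((((Real.continuous_exp.comp continuous_fst).sub continuous_const).mul
          continuous_snd).sub (Real.continuous_exp.comp continuous_fst)).continuousOn ?_
      intro p hp
      have := denom_neg hp.1 hp.2.1.le hp.2.2.le
      intro h
      nlinarith
  refine Integrable.mono'
    (g := fun p : ℝ × ℝ => (p.1 ^ (s.re - 1) * rexp (-(p.1 / 2)))
      * ((1 - p.2) ^ (-(2⁻¹:ℝ)) / 2)) ?_ hmeas ?_
  · exact (integrable_f_half (by linarith)).mul_prod integrable_g_half
  · rw [Measure.prod_restrict]
    filter_upwards [ae_restrict_mem (measurableSet_Ioi.prod measurableSet_Ioo)] with p hp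
    obtain ⟨ht, hz⟩ := hp
    rw [mem_Ioi] at ht
    obtain ⟨hz0, hz1⟩ := hz
    set t := p.1
    set z := p.2
    have hD : (rexp t - 1) * z - rexp t = -(rexp t * (1 - z) + z) := by ring
    have hE : 0 < rexp t * (1 - z) + z := by nlinarith [Real.exp_pos t]
    have hnorm : ‖Function.uncurry (fun t z : ℝ =>
        (t : ℂ) ^ (s - 1) * ((z / ((rexp t - 1) * z - rexp t) : ℝ) : ℂ)) p‖
        = t ^ (s.re - 1) * (z / (rexp t * (1 - z) + z)) := by
      rw [Function.uncurry_apply_pair, norm_mul,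
        Complex.norm_cpow_eq_rpow_re_of_pos ht, Complex.norm_real, Real.norm_eq_abs,
        Complex.sub_re, Complex.one_re, hD]
      congr 1
      rw [abs_div, abs_neg, abs_of_pos hz0, abs_of_pos hE]
    rw [hnorm, mul_assoc]
    refine mul_le_mul_of_nonneg_left ?_ (Real.rpow_nonneg ht.le _)
    -- core inequality
    have hsq1 : Real.sqrt (rexp t * (1 - z)) = Real.sqrt (rexp t) * Real.sqrt (1 - z) :=
      Real.sqrt_mul (Real.exp_pos t).le _
    have hzsq : z ≤ Real.sqrt z := by
      have h1 : Real.sqrt (z ^ 2) ≤ Real.sqrt z :=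
        Real.sqrt_le_sqrt (by nlinarith)
      rwa [Real.sqrt_sq hz0.le] at h1
    have hamgm : 2 * Real.sqrt (rexp t * (1 - z)) * Real.sqrt z
        ≤ rexp t * (1 - z) + z := by
      nlinarith [sq_nonneg (Real.sqrt (rexp t * (1 - z)) - Real.sqrt z),
        Real.sq_sqrt (by nlinarith [Real.exp_pos t] : (0:ℝ) ≤ rexp t * (1 - z)),
        Real.sq_sqrt hz0.le]
    have hrw : rexp (-(t / 2)) * ((1 - z) ^ (-(2⁻¹:ℝ)) / 2)
        = 1 / (2 * Real.sqrt (rexp t) * Real.sqrt (1 - z)) := by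
      rw [Real.rpow_neg (by linarith), show (2⁻¹:ℝ) = 1/2 by norm_num,
        ← Real.sqrt_eq_rpow, Real.exp_neg, ← sqrt_exp]
      field_simp
    have hs1 : 0 < Real.sqrt (rexp t) := Real.sqrt_pos.mpr (Real.exp_pos t)
    have hs2 : 0 < Real.sqrt (1 - z) := Real.sqrt_pos.mpr (by linarith)
    rw [hrw, div_le_div_iff₀ hE (by positivity)]
    calc z * (2 * Real.sqrt (rexp t) * Real.sqrt (1 - z))
        ≤ Real.sqrt z * (2 * Real.sqrt (rexp t) * Real.sqrt (1 - z)) := by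
          refine mul_le_mul_of_nonneg_right hzsq (by positivity)
      _ = 2 * Real.sqrt (rexp t * (1 - z)) * Real.sqrt z := by rw [hsq1]; ring
      _ ≤ rexp t * (1 - z) + z := hamgm
      _ = 1 * (rexp t * (1 - z) + z) := by ring

theorem stmt_13 (s : ℂ) (hs : 1 < s.re) :
    (s - 1) * riemannZeta s
      = -∫ z in (0 : ℝ)..1, Li s ((z : ℂ) / ((z : ℂ) - 1)) := by
  have hΓ : Complex.Gamma s ≠ 0 := Complex.Gamma_ne_zero_of_re_pos (by linarith)
  -- Step 1 : rewrite as integral over Ioo 0 1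
  rw [intervalIntegral.integral_of_le zero_le_one,
    MeasureTheory.integral_Ioc_eq_integral_Ioo]
  -- Step 2 : pointwise identity for Li on Ioo 0 1
  have step2 : ∀ z ∈ Ioo (0:ℝ) 1, Li s ((z : ℂ) / ((z : ℂ) - 1))
      = (Complex.Gamma s)⁻¹
        * ∫ t in Ioi (0:ℝ), (t : ℂ) ^ (s - 1)
            * ((z / ((rexp t - 1) * z - rexp t) : ℝ) : ℂ) := by
    intro z hz
    rw [Li, div_mul_eq_mul_div, div_eq_inv_mul]
    congr 1
    rw [← MeasureTheory.integral_const_mul]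
    refine setIntegral_congr_fun measurableSet_Ioi fun t ht => ?_
    have hz1 : (z : ℂ) - 1 ≠ 0 := by
      rw [show (z:ℂ) - 1 = ((z - 1 : ℝ) : ℂ) by push_cast; ring, Ne,
        Complex.ofReal_eq_zero]
      linarith [hz.2]
    have hden : ((rexp t - 1) * z - rexp t : ℝ) ≠ 0 := by
      have := denom_neg ht hz.1.le hz.2.le
      linarith
    have hden' : (((rexp t - 1) * z - rexp t : ℝ) : ℂ) ≠ 0 := Complex.ofReal_ne_zero.mpr hden
    have hexp : Complex.exp (t : ℂ) = ((rexp t : ℝ) : ℂ) := (Complex.ofReal_exp t).symm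
    have hsub : Complex.exp (t : ℂ) - (z : ℂ) / ((z : ℂ) - 1)
        = (((rexp t - 1) * z - rexp t : ℝ) : ℂ) / ((z : ℂ) - 1) := by
      rw [hexp]
      field_simp
      push_cast
      ring
    have hsubne : Complex.exp (t : ℂ) - (z : ℂ) / ((z : ℂ) - 1) ≠ 0 := by
      rw [hsub]
      exact div_ne_zero hden' hz1
    rw [hsub, Complex.ofReal_div]
    field_simp
  rw [MeasureTheory.setIntegral_congr_fun measurableSet_Ioo step2,
    MeasureTheory.integral_const_mul]
  -- Step 3 : Fubini
  have step3 := MeasureTheory.integral_integral_swap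
    (f := fun (z t : ℝ) => (t : ℂ) ^ (s - 1)
      * ((z / ((rexp t - 1) * z - rexp t) : ℝ) : ℂ))
    (μ := volume.restrict (Ioo (0:ℝ) 1)) (ν := volume.restrict (Ioi (0:ℝ)))
    ((integrable_K hs).swap)
  rw [step3]
  -- Step 4 : inner integral
  have step4 : ∀ t ∈ Ioi (0:ℝ),
      (∫ z in Ioo (0:ℝ) 1, (t : ℂ) ^ (s - 1)
        * ((z / ((rexp t - 1) * z - rexp t) : ℝ) : ℂ))
      = (t : ℂ) ^ (s - 1)
        * ((1 / (rexp t - 1) - t * rexp t / (rexp t - 1) ^ 2 : ℝ) : ℂ) := by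
    intro t ht
    rw [MeasureTheory.integral_const_mul]
    congr 1
    rw [← inner_integral ht]
    exact integral_ofReal
  rw [MeasureTheory.setIntegral_congr_fun measurableSet_Ioi step4]
  -- Step 5 : split and evaluate
  have step5 : -(∫ t in Ioi (0:ℝ), (t : ℂ) ^ (s - 1)
        * ((1 / (rexp t - 1) - t * rexp t / (rexp t - 1) ^ 2 : ℝ) : ℂ))
      = (∫ t in Ioi (0:ℝ), (t : ℂ) ^ (s + 1 - 1) * ((rexp t / (rexp t - 1) ^ 2 : ℝ) : ℂ))
        - ∫ t in Ioi (0:ℝ), (t : ℂ) ^ (s - 1) * ((1 / (rexp t - 1) : ℝ) : ℂ) := by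
    rw [← MeasureTheory.integral_sub (integrable_F2 hs) (integrable_F1 hs),
      ← MeasureTheory.integral_neg]
    refine setIntegral_congr_fun measurableSet_Ioi fun t ht => ?_
    have htne : (t : ℂ) ≠ 0 := Complex.ofReal_ne_zero.mpr (ne_of_gt ht)
    rw [show s + 1 - 1 = (s - 1) + 1 by ring, Complex.cpow_add _ _ htne, Complex.cpow_one]
    push_cast
    ring
  rw [← mul_neg, step5]
  have e1 : (∫ t in Ioi (0:ℝ), (t : ℂ) ^ (s + 1 - 1) * ((rexp t / (rexp t - 1) ^ 2 : ℝ) : ℂ))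
      = s * Complex.Gamma s * riemannZeta s := by
    rw [← mellin_exp_div_exp_sub_one_sq_eq hs]
    simp [mellin, smul_eq_mul]
  have e2 : (∫ t in Ioi (0:ℝ), (t : ℂ) ^ (s - 1) * ((1 / (rexp t - 1) : ℝ) : ℂ))
      = Complex.Gamma s * riemannZeta s := by
    rw [← mellin_one_div_exp_sub_one_eq hs]
    simp [mellin, smul_eq_mul]
  rw [e1, e2]
  field_simp
end
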